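/- arXiv:2406.13772 — 2 statements merged into one kernel-verified Lean document; each statement's English description precedes it below -/
import Mathlib

section
/- Let d > 1 and 1 < p < d. Let w be a doubling weight on ℝⁿ satisfying the lower Ahlfors condition w(B(x,r)) ≥ c r^d for all x ∈ ℝⁿ and r > 0, with c > 0. Then there is a constant C depending on w, p, d such that for every nonnegative f ∈ L^p(w) with ‖f‖_{L^p(w)} > 0 and every x ∈ ℝⁿ, T_w f(x) ≤ C ‖f‖_{L^p(w)}^{p/d} · (M^c_w f(x))^{1−p/d}. -/
set_option maxHeartbeats 1000000


open MeasureTheory Metric ENNReal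

noncomputable section

/-- `w(B(x,r)) = ∫_{B(x,r)} w`. -/
def weightMass {n : ℕ} (w : EuclideanSpace ℝ (Fin n) → ℝ)
    (x : EuclideanSpace ℝ (Fin n)) (r : ℝ) : ℝ :=
  ∫ y in ball x r, w y

/-- `w` is a doubling weight with doubling constant `D`. -/
def IsDoubling {n : ℕ} (w : EuclideanSpace ℝ (Fin n) → ℝ) (D : ℝ) : Prop :=
  (∀ x, 0 ≤ w x) ∧ LocallyIntegrable w volume ∧
    ∀ (x : EuclideanSpace ℝ (Fin n)) (r : ℝ), 0 < r →
      (∫ y in ball x (2 * r), w y) ≤ D * ∫ y in ball x r, w y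

/-- The potential operator `T_w f(x) = ∫ (|x−y|/w(B(x,|x−y|))) f(y) w(y) dy`,
as an `ℝ≥0∞`-valued integral. -/
def Tw {n : ℕ} (w f : EuclideanSpace ℝ (Fin n) → ℝ) (x : EuclideanSpace ℝ (Fin n)) : ℝ≥0∞ :=
  ∫⁻ y, ENNReal.ofReal ((dist x y / weightMass w x (dist x y)) * f y * w y)

/-- The centered weighted maximal function
`M^c_w f(x) = sup_{r>0} (1/w(B(x,r))) ∫_{B(x,r)} |f| w`. -/
def Mcw {n : ℕ} (w f : EuclideanSpace ℝ (Fin n) → ℝ) (x : EuclideanSpace ℝ (Fin n)) : ℝ≥0∞ :=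
  ⨆ (r : ℝ) (_ : 0 < r),
    (∫⁻ y in ball x r, ENNReal.ofReal (|f y| * w y)) / ENNReal.ofReal (weightMass w x r)

lemma holder_weighted {α : Type*} [MeasurableSpace α] (μ : Measure α) {p q : ℝ}
    (hpq : Real.HolderConjugate p q) {f v : α → ℝ} (hf : ∀ y, 0 ≤ f y) (hv : ∀ y, 0 ≤ v y)
    (hfm : AEMeasurable f μ) (hvm : AEMeasurable v μ) :
    ∫⁻ y, ENNReal.ofReal (f y * v y) ∂μ ≤
      (∫⁻ y, ENNReal.ofReal (f y ^ p * v y) ∂μ) ^ (1 / p) *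
        (∫⁻ y, ENNReal.ofReal (v y) ∂μ) ^ (1 / q) := by
  set F : α → ℝ≥0∞ := fun y => ENNReal.ofReal (f y) * ENNReal.ofReal (v y) ^ (1 / p) with hF
  set G : α → ℝ≥0∞ := fun y => ENNReal.ofReal (v y) ^ (1 / q) with hG
  have hvm' : AEMeasurable (fun y => ENNReal.ofReal (v y)) μ :=
    ENNReal.measurable_ofReal.comp_aemeasurable hvm
  have hFm : AEMeasurable F μ :=
    (ENNReal.measurable_ofReal.comp_aemeasurable hfm).mul (hvm'.pow_const _)
  have hGm : AEMeasurable G μ := hvm'.pow_const _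
  have key := ENNReal.lintegral_mul_le_Lp_mul_Lq μ hpq hFm hGm
  have h1 : ∀ y, (F * G) y = ENNReal.ofReal (f y * v y) := by
    intro y
    have : ENNReal.ofReal (v y) ^ (1 / p) * ENNReal.ofReal (v y) ^ (1 / q)
        = ENNReal.ofReal (v y) := by
      rw [← ENNReal.rpow_add_of_nonneg _ _ hpq.one_div_nonneg hpq.symm.one_div_nonneg]
      rw [one_div, one_div, hpq.inv_add_inv_eq_one, ENNReal.rpow_one]
    simp only [Pi.mul_apply, hF, hG, mul_assoc, this,
      ENNReal.ofReal_mul (hf y)]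
  have h2 : ∀ y, F y ^ p = ENNReal.ofReal (f y ^ p * v y) := by
    intro y
    rw [hF, ENNReal.mul_rpow_of_nonneg _ _ hpq.nonneg, ← ENNReal.rpow_mul,
      one_div_mul_cancel hpq.ne_zero, ENNReal.rpow_one,
      ENNReal.ofReal_rpow_of_nonneg (hf y) hpq.nonneg,
      ← ENNReal.ofReal_mul (Real.rpow_nonneg (hf y) p)]
  have h3 : ∀ y, G y ^ q = ENNReal.ofReal (v y) := by
    intro y
    rw [hG, ← ENNReal.rpow_mul, one_div_mul_cancel hpq.symm.ne_zero, ENNReal.rpow_one]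
  calc ∫⁻ y, ENNReal.ofReal (f y * v y) ∂μ = ∫⁻ y, (F * G) y ∂μ := by
        exact (lintegral_congr h1).symm
    _ ≤ (∫⁻ y, F y ^ p ∂μ) ^ (1 / p) * (∫⁻ y, G y ^ q ∂μ) ^ (1 / q) := key
    _ = _ := by rw [lintegral_congr h2, lintegral_congr h3]

section facts

variable {n : ℕ} {w : EuclideanSpace ℝ (Fin n) → ℝ}

lemma integrableOn_ball_w (hloc : LocallyIntegrable w volume)
    (x : EuclideanSpace ℝ (Fin n)) (r : ℝ) : IntegrableOn w (ball x r) volume :=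
  (hloc.integrableOn_isCompact (isCompact_closedBall x r)).mono_set ball_subset_closedBall

lemma weightMass_nonneg (hw0 : ∀ y, 0 ≤ w y) (x : EuclideanSpace ℝ (Fin n)) (r : ℝ) :
    0 ≤ weightMass w x r :=
  setIntegral_nonneg measurableSet_ball fun y _ => hw0 y

lemma weightMass_mono (hw0 : ∀ y, 0 ≤ w y) (hloc : LocallyIntegrable w volume)
    (x : EuclideanSpace ℝ (Fin n)) {r r' : ℝ} (h : r ≤ r') :
    weightMass w x r ≤ weightMass w x r' := by
  refine setIntegral_mono_set (integrableOn_ball_w hloc x r')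
    (Filter.Eventually.of_forall fun y => hw0 y) ?_
  exact (ball_subset_ball h).eventuallyLE

lemma lintegral_w_ball (hw0 : ∀ y, 0 ≤ w y) (hloc : LocallyIntegrable w volume)
    (x : EuclideanSpace ℝ (Fin n)) (r : ℝ) :
    ∫⁻ y in ball x r, ENNReal.ofReal (w y) = ENNReal.ofReal (weightMass w x r) :=
  (ofReal_integral_eq_lintegral_ofReal (integrableOn_ball_w hloc x r)
    (Filter.Eventually.of_forall fun y => hw0 y)).symm

end facts

/-- Let `d > 1`, `1 < p < d`, and let `w` be a doubling weight with
`w(B(x,r)) ≥ c rᵈ`. Then there is `C = C(w,p,d)` such that for every nonnegative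
`f ∈ L^p(w)` with `‖f‖_{L^p(w)} > 0` and every `x`,
`T_w f(x) ≤ C ‖f‖_{L^p(w)}^{p/d} (M^c_w f(x))^{1−p/d}`. -/
theorem stmt13 (n : ℕ) (d p : ℝ) (hd : 1 < d) (hp : 1 < p) (hpd : p < d)
    (w : EuclideanSpace ℝ (Fin n) → ℝ) (D : ℝ) (hw : IsDoubling w D)
    (c : ℝ) (hc : 0 < c)
    (hAhlfors : ∀ (x : EuclideanSpace ℝ (Fin n)) (r : ℝ), 0 < r →
      c * r ^ d ≤ ∫ y in ball x r, w y) :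
    ∃ C : ℝ, 0 < C ∧
      ∀ f : EuclideanSpace ℝ (Fin n) → ℝ, (∀ x, 0 ≤ f x) → Measurable f →
        Integrable (fun x => f x ^ p * w x) →
        0 < (∫ x, f x ^ p * w x) ^ (1 / p) →
          ∀ x : EuclideanSpace ℝ (Fin n),
            Tw w f x ≤
              ENNReal.ofReal (C * ((∫ z, f z ^ p * w z) ^ (1 / p)) ^ (p / d)) *
                Mcw w f x ^ (1 - p / d) := by
  obtain ⟨hw0, hloc, hdbl⟩ := hw
  have hp0 : (0:ℝ) < p := lt_trans one_pos hp
  have hd0 : (0:ℝ) < d := lt_trans one_pos hd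
  set q : ℝ := p / (p - 1) with hq
  have hpq : Real.HolderConjugate p q := Real.HolderConjugate.conjExponent hp
  -- D ≥ 1
  have hD1 : 1 ≤ D := by
    have h1 : 0 < weightMass w 0 1 := by
      have := hAhlfors 0 1 one_pos
      have h0 : (0:ℝ) < c * 1 ^ d := by positivity
      exact lt_of_lt_of_le h0 this
    have h2 : weightMass w 0 1 ≤ weightMass w 0 2 := weightMass_mono hw0 hloc 0 (by norm_num)
    have h3 : weightMass w 0 (2 * 1) ≤ D * weightMass w 0 1 := hdbl 0 1 one_pos
    norm_num at h3
    nlinarith [h1, h2, h3]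
  have hD0 : 0 < D := lt_of_lt_of_le one_pos hD1
  -- geometric ratio
  set q0 : ℝ := (2:ℝ) ^ (1 - d / p) with hq0def
  have hdp1 : 1 < d / p := (one_lt_div hp0).2 hpd
  have hq0pos : 0 < q0 := Real.rpow_pos_of_pos two_pos _
  have hq0lt : q0 < 1 := Real.rpow_lt_one_of_one_lt_of_neg one_lt_two (by linarith)
  set Cf : ℝ := 2 * D ^ (1 / q) * c ^ (-(1 / p)) * (1 - q0)⁻¹ with hCf
  have hCf0 : 0 < Cf := by
    have h1 : (0:ℝ) < D ^ (1/q) := Real.rpow_pos_of_pos hD0 _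
    have h2 : (0:ℝ) < c ^ (-(1/p)) := Real.rpow_pos_of_pos hc _
    have h3 : (0:ℝ) < (1 - q0)⁻¹ := inv_pos.2 (by linarith)
    positivity
  refine ⟨2 * D + Cf, by positivity, ?_⟩
  intro f hf0 hfm hint hNpos x
  set N : ℝ := (∫ z, f z ^ p * w z) ^ (1 / p) with hNdef
  have hN : 0 < N := hNpos
  set M : ℝ≥0∞ := Mcw w f x with hMdef
  set W : ℝ → ℝ := weightMass w x with hWdef
  set g : EuclideanSpace ℝ (Fin n) → ℝ≥0∞ := fun y => ENNReal.ofReal (f y * w y) with hgdef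
  set K : EuclideanSpace ℝ (Fin n) → ℝ := fun y => dist x y / W (dist x y) with hKdef
  have hK0 : ∀ y, 0 ≤ K y := fun y => div_nonneg dist_nonneg (weightMass_nonneg hw0 x _)
  have hTw : Tw w f x = ∫⁻ y, ENNReal.ofReal (K y) * g y := by
    refine lintegral_congr fun y => ?_
    rw [hgdef, mul_assoc, ENNReal.ofReal_mul (hK0 y)]
  have hWpos : ∀ r : ℝ, 0 < r → 0 < W r := by
    intro r hr
    have := hAhlfors x r hr
    have h0 : (0:ℝ) < c * r ^ d := by positivity
    exact lt_of_lt_of_le h0 this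
  have hWmono : ∀ {a b : ℝ}, a ≤ b → W a ≤ W b := fun h => weightMass_mono hw0 hloc x h
  have hWdbl : ∀ r : ℝ, 0 < r → W (2 * r) ≤ D * W r := fun r hr => hdbl x r hr
  have hgm : AEMeasurable g volume :=
    ENNReal.measurable_ofReal.comp_aemeasurable
      (hfm.aemeasurable.mul hloc.aestronglyMeasurable.aemeasurable)
  -- maximal function bound
  have hMax : ∀ r : ℝ, 0 < r → ∫⁻ y in ball x r, g y ≤ M * ENNReal.ofReal (W r) := by
    intro r hr
    have h1 : (∫⁻ y in ball x r, g y) / ENNReal.ofReal (W r) ≤ M := by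
      have he : ∫⁻ y in ball x r, g y = ∫⁻ y in ball x r, ENNReal.ofReal (|f y| * w y) := by
        refine lintegral_congr fun y => by rw [hgdef, abs_of_nonneg (hf0 y)]
      rw [hMdef, Mcw, he]
      exact le_iSup₂ (f := fun (r : ℝ) (_ : 0 < r) =>
        (∫⁻ y in ball x r, ENNReal.ofReal (|f y| * w y)) / ENNReal.ofReal (weightMass w x r)) r hr
    rwa [ENNReal.div_le_iff_le_mul (Or.inl (by simp [ENNReal.ofReal_pos.2 (hWpos r hr), ne_of_gt]))
      (Or.inl ENNReal.ofReal_ne_top)] at h1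
  -- Hölder bound
  have hInn : 0 ≤ ∫ z, f z ^ p * w z :=
    integral_nonneg fun z => mul_nonneg (Real.rpow_nonneg (hf0 z) p) (hw0 z)
  have hNp : N ^ p = ∫ z, f z ^ p * w z := by
    rw [hNdef, ← Real.rpow_mul hInn, one_div_mul_cancel (ne_of_gt hp0), Real.rpow_one]
  have hHold : ∀ r : ℝ, 0 < r →
      ∫⁻ y in ball x r, g y ≤ ENNReal.ofReal N * ENNReal.ofReal (W r) ^ (1 / q) := by
    intro r hr
    have h1 := holder_weighted (volume.restrict (ball x r)) hpq hf0 hw0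
      hfm.aemeasurable.restrict hloc.aestronglyMeasurable.aemeasurable.restrict
    have h2 : ∫⁻ y in ball x r, ENNReal.ofReal (f y ^ p * w y) ≤ ENNReal.ofReal (N ^ p) := by
      rw [hNp]
      calc ∫⁻ y in ball x r, ENNReal.ofReal (f y ^ p * w y)
          ≤ ∫⁻ y, ENNReal.ofReal (f y ^ p * w y) := setLIntegral_le_lintegral _ _
        _ = _ := (ofReal_integral_eq_lintegral_ofReal hint (Filter.Eventually.of_forall fun y =>
            mul_nonneg (Real.rpow_nonneg (hf0 y) p) (hw0 y))).symm
    calc ∫⁻ y in ball x r, g y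
        ≤ (∫⁻ y in ball x r, ENNReal.ofReal (f y ^ p * w y)) ^ (1 / p) *
          (∫⁻ y in ball x r, ENNReal.ofReal (w y)) ^ (1 / q) := h1
      _ ≤ ENNReal.ofReal (N ^ p) ^ (1 / p) * ENNReal.ofReal (W r) ^ (1 / q) := by
          rw [lintegral_w_ball hw0 hloc x r, hWdef]
          exact mul_le_mul_left (ENNReal.rpow_le_rpow h2 (by positivity)) _
      _ = _ := by
          rw [ENNReal.ofReal_rpow_of_nonneg (Real.rpow_nonneg hN.le p) (by positivity),
            ← Real.rpow_mul hN.le, mul_one_div, div_self (ne_of_gt hp0), Real.rpow_one]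
  -- case analysis on M
  rcases eq_or_ne M 0 with hM0 | hM0
  · -- M = 0 : Tw = 0
    have hcover : (Set.univ : Set (EuclideanSpace ℝ (Fin n))) ⊆
        ⋃ k : ℕ, ball x ((k : ℝ) + 1) := by
      intro y _
      refine Set.mem_iUnion.2 ⟨⌈dist y x⌉₊, ?_⟩
      exact mem_ball.2 (lt_of_le_of_lt (Nat.le_ceil _) (lt_add_one _))
    have hzero : ∀ k : ℕ, ∫⁻ y in ball x ((k : ℝ) + 1), g y = 0 := by
      intro k
      have h := hMax ((k : ℝ) + 1) (by positivity)
      rw [hM0, zero_mul] at h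
      exact le_antisymm h zero_le
    have hg0 : ∫⁻ y, g y = 0 := by
      have h1 : ∫⁻ y, g y ≤ ∑' k : ℕ, ∫⁻ y in ball x ((k : ℝ) + 1), g y := by
        calc ∫⁻ y, g y = ∫⁻ y in Set.univ, g y := (setLIntegral_univ _).symm
          _ ≤ ∫⁻ y in ⋃ k : ℕ, ball x ((k : ℝ) + 1), g y := lintegral_mono_set hcover
          _ ≤ _ := lintegral_iUnion_le _ _
      simpa [hzero] using h1
    have hgae : ∀ᵐ y, g y = 0 := (lintegral_eq_zero_iff' hgm).1 hg0
    have hT0 : Tw w f x = 0 := by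
      rw [hTw]
      have h2 : ∀ᵐ y, ENNReal.ofReal (K y) * g y = 0 :=
        hgae.mono fun y hy => by rw [hy, mul_zero]
      rw [lintegral_congr_ae h2, lintegral_zero]
    rw [hT0]
    exact zero_le
  have hCpos : (0:ℝ) < 2 * D + Cf := by linarith
  have h1pd : (0:ℝ) < 1 - p / d := by
    have : p / d < 1 := (div_lt_one hd0).2 hpd
    linarith
  rcases eq_or_ne M ⊤ with hMt | hMt
  · -- M = ⊤ : RHS = ⊤
    rw [hMt, ENNReal.top_rpow_of_pos h1pd, ENNReal.mul_top
      (ne_of_gt (ENNReal.ofReal_pos.2 (mul_pos hCpos (Real.rpow_pos_of_pos hN _))))]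
    exact le_top
  -- main case : 0 < M < ⊤
  set M' : ℝ := M.toReal with hM'def
  have hM' : 0 < M' := ENNReal.toReal_pos hM0 hMt
  set R : ℝ := (N / M') ^ (p / d) with hRdef
  have hR : 0 < R := Real.rpow_pos_of_pos (div_pos hN hM') _
  have hhalf : ∀ j : ℕ, (0:ℝ) < R / 2 ^ j := fun j => by positivity
  have htwo : ∀ j : ℕ, 2 * (R / 2 ^ (j + 1)) = R / 2 ^ j := by
    intro j
    field_simp [pow_succ]
    ring
  -- NEAR PART
  have hnear : ∫⁻ y in ball x R, ENNReal.ofReal (K y) * g y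
      ≤ M * ENNReal.ofReal (2 * D * R) := by
    set A : ℕ → Set (EuclideanSpace ℝ (Fin n)) :=
      fun j => ball x (R / 2 ^ j) \ ball x (R / 2 ^ (j + 1)) with hAdef
    have hcover : ball x R ⊆ {x} ∪ ⋃ j, A j := by
      intro y hy
      rcases eq_or_ne y x with h | h
      · exact Or.inl (by simp [h])
      · refine Or.inr (Set.mem_iUnion.2 ?_)
        have ht0 : 0 < dist y x := dist_pos.2 h
        have htR : dist y x < R := mem_ball.1 hy
        have hex : ∃ j : ℕ, R / 2 ^ (j + 1) ≤ dist y x := by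
          obtain ⟨m, hm⟩ := pow_unbounded_of_one_lt (R / dist y x) (one_lt_two (α := ℝ))
          refine ⟨m, ?_⟩
          rw [div_lt_iff₀ ht0] at hm
          rw [div_le_iff₀ (by positivity)]
          have hstep : (2:ℝ) ^ m * dist y x ≤ dist y x * 2 ^ (m + 1) := by
            rw [pow_succ]
            nlinarith [pow_pos (two_pos (α := ℝ)) m, ht0]
          linarith
        have hlow : R / 2 ^ (Nat.find hex + 1) ≤ dist y x := Nat.find_spec hex
        have hupp : dist y x < R / 2 ^ (Nat.find hex) := by
          rcases Nat.eq_zero_or_pos (Nat.find hex) with h0 | h0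
          · rw [h0]; simpa using htR
          · obtain ⟨k, hk⟩ := Nat.exists_eq_succ_of_ne_zero h0.ne'
            rw [hk]
            have hmin := Nat.find_min hex (show k < Nat.find hex by omega)
            push_neg at hmin
            exact hmin
        exact ⟨Nat.find hex, mem_ball.2 hupp,
          fun hmem => absurd (mem_ball.1 hmem) (not_lt.2 hlow)⟩
    have hsingleton : ∫⁻ y in ({x} : Set (EuclideanSpace ℝ (Fin n))),
        ENNReal.ofReal (K y) * g y = 0 := by
      rw [lintegral_singleton]
      have hKx : K x = 0 := by simp [hKdef, dist_self]
      simp [hKx]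
    have hterm : ∀ j : ℕ, ∫⁻ y in A j, ENNReal.ofReal (K y) * g y
        ≤ M * ENNReal.ofReal (D * R * (1 / 2) ^ j) := by
      intro j
      have hWj : 0 < W (R / 2 ^ (j + 1)) := hWpos _ (hhalf (j + 1))
      have hbd : ∀ y ∈ A j, ENNReal.ofReal (K y) * g y
          ≤ ENNReal.ofReal ((R / 2 ^ j) / W (R / 2 ^ (j + 1))) * g y := by
        intro y hy
        refine mul_le_mul_left (ENNReal.ofReal_le_ofReal ?_) _
        have h1 : dist x y < R / 2 ^ j := by rw [dist_comm]; exact mem_ball.1 hy.1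
        have h2 : R / 2 ^ (j + 1) ≤ dist x y := by
          rw [dist_comm]; exact not_lt.1 fun h => hy.2 (mem_ball.2 h)
        exact div_le_div₀ (by positivity) h1.le hWj (hWmono h2)
      calc ∫⁻ y in A j, ENNReal.ofReal (K y) * g y
          ≤ ∫⁻ y in A j, ENNReal.ofReal ((R / 2 ^ j) / W (R / 2 ^ (j + 1))) * g y :=
            setLIntegral_mono_ae (aemeasurable_const.mul hgm.restrict)
              (Filter.Eventually.of_forall hbd)
        _ = ENNReal.ofReal ((R / 2 ^ j) / W (R / 2 ^ (j + 1))) * ∫⁻ y in A j, g y :=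
            lintegral_const_mul' _ _ ENNReal.ofReal_ne_top
        _ ≤ ENNReal.ofReal ((R / 2 ^ j) / W (R / 2 ^ (j + 1))) *
            (M * ENNReal.ofReal (W (R / 2 ^ j))) :=
            mul_le_mul_right (le_trans (lintegral_mono_set Set.diff_subset)
              (hMax _ (hhalf j))) _
        _ ≤ ENNReal.ofReal ((R / 2 ^ j) / W (R / 2 ^ (j + 1))) *
            (M * ENNReal.ofReal (D * W (R / 2 ^ (j + 1)))) := by
            refine mul_le_mul_right (mul_le_mul_right (ENNReal.ofReal_le_ofReal ?_) _) _
            rw [← htwo j]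
            exact hWdbl _ (hhalf (j + 1))
        _ = M * (ENNReal.ofReal ((R / 2 ^ j) / W (R / 2 ^ (j + 1))) *
            ENNReal.ofReal (D * W (R / 2 ^ (j + 1)))) := by ring
        _ = M * ENNReal.ofReal ((R / 2 ^ j) / W (R / 2 ^ (j + 1)) *
            (D * W (R / 2 ^ (j + 1)))) := by
            rw [ENNReal.ofReal_mul (div_nonneg (hhalf j).le hWj.le)]
        _ = M * ENNReal.ofReal (D * R * (1 / 2) ^ j) := by
            congr 1
            congr 1
            rw [div_mul_eq_mul_div, mul_comm]
            field_simp
            rw [← mul_pow]; norm_num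
    calc ∫⁻ y in ball x R, ENNReal.ofReal (K y) * g y
        ≤ ∫⁻ y in {x} ∪ ⋃ j, A j, ENNReal.ofReal (K y) * g y := lintegral_mono_set hcover
      _ ≤ (∫⁻ y in ({x} : Set (EuclideanSpace ℝ (Fin n))), ENNReal.ofReal (K y) * g y) +
          ∫⁻ y in ⋃ j, A j, ENNReal.ofReal (K y) * g y := lintegral_union_le _ _ _
      _ = ∫⁻ y in ⋃ j, A j, ENNReal.ofReal (K y) * g y := by rw [hsingleton, zero_add]
      _ ≤ ∑' j, ∫⁻ y in A j, ENNReal.ofReal (K y) * g y := lintegral_iUnion_le _ _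
      _ ≤ ∑' j, M * ENNReal.ofReal (D * R * (1 / 2) ^ j) := ENNReal.tsum_le_tsum hterm
      _ = M * ∑' j : ℕ, ENNReal.ofReal (D * R * (1 / 2) ^ j) := ENNReal.tsum_mul_left
      _ = M * ENNReal.ofReal (∑' j : ℕ, D * R * (1 / 2) ^ j) := by
          rw [ENNReal.ofReal_tsum_of_nonneg (fun j => by positivity)
            ((summable_geometric_of_lt_one (by norm_num) (by norm_num)).mul_left _)]
      _ = M * ENNReal.ofReal (2 * D * R) := by
          have hsum : (∑' j : ℕ, D * R * (1 / 2) ^ j) = 2 * D * R := by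
            rw [tsum_mul_left, tsum_geometric_two]
            ring
          rw [hsum]
  -- FAR PART
  have hfar : ∫⁻ y in (ball x R)ᶜ, ENNReal.ofReal (K y) * g y
      ≤ ENNReal.ofReal (Cf * N * R ^ (1 - d / p)) := by
    set A : ℕ → Set (EuclideanSpace ℝ (Fin n)) :=
      fun j => ball x (R * 2 ^ (j + 1)) \ ball x (R * 2 ^ j) with hAdef
    have hrad : ∀ j : ℕ, (0:ℝ) < R * 2 ^ j := fun j => by positivity
    have hcover : (ball x R)ᶜ ⊆ ⋃ j, A j := by
      intro y hy
      have htR : R ≤ dist y x := not_lt.1 fun h => hy (mem_ball.2 h)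
      have hex : ∃ j : ℕ, dist y x < R * 2 ^ (j + 1) := by
        obtain ⟨m, hm⟩ := pow_unbounded_of_one_lt (dist y x / R) (one_lt_two (α := ℝ))
        refine ⟨m, ?_⟩
        rw [div_lt_iff₀ hR] at hm
        calc dist y x < 2 ^ m * R := hm
          _ ≤ R * 2 ^ (m + 1) := by
              rw [pow_succ]
              nlinarith [pow_pos (two_pos (α := ℝ)) m, hR]
      have hupp : dist y x < R * 2 ^ (Nat.find hex + 1) := Nat.find_spec hex
      have hlow : R * 2 ^ (Nat.find hex) ≤ dist y x := by
        rcases Nat.eq_zero_or_pos (Nat.find hex) with h0 | h0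
        · rw [h0]; simpa using htR
        · obtain ⟨k, hk⟩ := Nat.exists_eq_succ_of_ne_zero h0.ne'
          rw [hk]
          have hmin := Nat.find_min hex (show k < Nat.find hex by omega)
          push_neg at hmin
          exact hmin
      exact Set.mem_iUnion.2 ⟨Nat.find hex, mem_ball.2 hupp,
        fun hmem => absurd (mem_ball.1 hmem) (not_lt.2 hlow)⟩
    have hq1 : 1 / q - 1 = -(1 / p) := by
      have h := hpq.inv_add_inv_eq_one
      rw [one_div, one_div]
      linarith
    have hterm : ∀ j : ℕ, ∫⁻ y in A j, ENNReal.ofReal (K y) * g y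
        ≤ ENNReal.ofReal ((2 * N * D ^ (1 / q) * c ^ (-(1 / p)) * R ^ (1 - d / p)) * q0 ^ j) := by
      intro j
      have hs : 0 < R * 2 ^ j := hrad j
      have hWj : 0 < W (R * 2 ^ j) := hWpos _ hs
      have hbd : ∀ y ∈ A j, ENNReal.ofReal (K y) * g y
          ≤ ENNReal.ofReal ((R * 2 ^ (j + 1)) / W (R * 2 ^ j)) * g y := by
        intro y hy
        refine mul_le_mul_left (ENNReal.ofReal_le_ofReal ?_) _
        have h1 : dist x y < R * 2 ^ (j + 1) := by rw [dist_comm]; exact mem_ball.1 hy.1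
        have h2 : R * 2 ^ j ≤ dist x y := by
          rw [dist_comm]; exact not_lt.1 fun h => hy.2 (mem_ball.2 h)
        exact div_le_div₀ (by positivity) h1.le hWj (hWmono h2)
      have hWjlow : c * (R * 2 ^ j) ^ d ≤ W (R * 2 ^ j) := hAhlfors x _ hs
      have hreal : (R * 2 ^ (j + 1)) / W (R * 2 ^ j) * (N * (D * W (R * 2 ^ j)) ^ (1 / q))
          ≤ (2 * N * D ^ (1 / q) * c ^ (-(1 / p)) * R ^ (1 - d / p)) * q0 ^ j := by
        have key1 : W (R * 2 ^ j) ^ (1 / q - 1) ≤ (c * (R * 2 ^ j) ^ d) ^ (1 / q - 1) := by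
          refine Real.rpow_le_rpow_of_nonpos (by positivity) hWjlow ?_
          rw [hq1]
          have := hpq.one_div_pos
          linarith
        have e1 : (R * 2 ^ (j + 1)) / W (R * 2 ^ j) * (N * (D * W (R * 2 ^ j)) ^ (1 / q))
            = (2 * N * D ^ (1 / q)) * ((R * 2 ^ j) * W (R * 2 ^ j) ^ (1 / q - 1)) := by
          rw [Real.mul_rpow hD0.le hWj.le, Real.rpow_sub hWj, Real.rpow_one, pow_succ]
          field_simp
        have e2 : (c * (R * 2 ^ j) ^ d) ^ (1 / q - 1)
            = c ^ (-(1 / p)) * ((R * 2 ^ j) ^ (-(d / p))) := by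
          rw [hq1, Real.mul_rpow hc.le (Real.rpow_nonneg hs.le d), ← Real.rpow_mul hs.le]
          rw [show d * -(1 / p) = -(d / p) by ring]
        have e3 : (R * 2 ^ j) * (R * 2 ^ j) ^ (-(d / p)) = (R * 2 ^ j) ^ (1 - d / p) := by
          rw [show (1 : ℝ) - d / p = 1 + -(d / p) by ring, Real.rpow_add hs, Real.rpow_one]
        have e4' : ((2:ℝ) ^ j) ^ (1 - d / p) = q0 ^ j := by
          have h2j : ((2:ℝ) ^ j) = (2:ℝ) ^ (j : ℝ) := (Real.rpow_natCast 2 j).symm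
          rw [h2j, ← Real.rpow_mul (by norm_num : (0:ℝ) ≤ 2), mul_comm,
            Real.rpow_mul (by norm_num : (0:ℝ) ≤ 2), Real.rpow_natCast, hq0def]
        have e4 : (R * 2 ^ j) ^ (1 - d / p) = R ^ (1 - d / p) * q0 ^ j := by
          rw [Real.mul_rpow hR.le (by positivity : (0:ℝ) ≤ 2 ^ j), e4']
        calc (R * 2 ^ (j + 1)) / W (R * 2 ^ j) * (N * (D * W (R * 2 ^ j)) ^ (1 / q))
            = (2 * N * D ^ (1 / q)) * ((R * 2 ^ j) * W (R * 2 ^ j) ^ (1 / q - 1)) := e1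
          _ ≤ (2 * N * D ^ (1 / q)) * ((R * 2 ^ j) * (c * (R * 2 ^ j) ^ d) ^ (1 / q - 1)) := by
              refine mul_le_mul_of_nonneg_left (mul_le_mul_of_nonneg_left key1 hs.le) ?_
              have hD' : (0:ℝ) ≤ D ^ (1 / q) := (Real.rpow_pos_of_pos hD0 _).le
              positivity
          _ = (2 * N * D ^ (1 / q) * c ^ (-(1 / p)) * R ^ (1 - d / p)) * q0 ^ j := by
              rw [e2, show (R * 2 ^ j) * (c ^ (-(1 / p)) * (R * 2 ^ j) ^ (-(d / p)))
                = c ^ (-(1 / p)) * ((R * 2 ^ j) * (R * 2 ^ j) ^ (-(d / p))) by ring, e3, e4]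
              ring
      calc ∫⁻ y in A j, ENNReal.ofReal (K y) * g y
          ≤ ∫⁻ y in A j, ENNReal.ofReal ((R * 2 ^ (j + 1)) / W (R * 2 ^ j)) * g y :=
            setLIntegral_mono_ae (aemeasurable_const.mul hgm.restrict)
              (Filter.Eventually.of_forall hbd)
        _ = ENNReal.ofReal ((R * 2 ^ (j + 1)) / W (R * 2 ^ j)) * ∫⁻ y in A j, g y :=
            lintegral_const_mul' _ _ ENNReal.ofReal_ne_top
        _ ≤ ENNReal.ofReal ((R * 2 ^ (j + 1)) / W (R * 2 ^ j)) *
            (ENNReal.ofReal N * ENNReal.ofReal (W (R * 2 ^ (j + 1))) ^ (1 / q)) :=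
            mul_le_mul_right (le_trans (lintegral_mono_set Set.diff_subset)
              (hHold _ (hrad (j + 1)))) _
        _ ≤ ENNReal.ofReal ((R * 2 ^ (j + 1)) / W (R * 2 ^ j)) *
            (ENNReal.ofReal N * ENNReal.ofReal (D * W (R * 2 ^ j)) ^ (1 / q)) := by
            refine mul_le_mul_right (mul_le_mul_right
              (ENNReal.rpow_le_rpow (ENNReal.ofReal_le_ofReal ?_) hpq.symm.one_div_nonneg) _) _
            rw [show R * 2 ^ (j + 1) = 2 * (R * 2 ^ j) by rw [pow_succ]; ring]
            exact hWdbl _ hs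
        _ = ENNReal.ofReal ((R * 2 ^ (j + 1)) / W (R * 2 ^ j) *
            (N * (D * W (R * 2 ^ j)) ^ (1 / q))) := by
            rw [ENNReal.ofReal_rpow_of_nonneg (mul_nonneg hD0.le hWj.le) hpq.symm.one_div_nonneg,
              ← ENNReal.ofReal_mul hN.le,
              ← ENNReal.ofReal_mul (div_nonneg (hrad (j + 1)).le hWj.le)]
        _ ≤ _ := ENNReal.ofReal_le_ofReal hreal
    calc ∫⁻ y in (ball x R)ᶜ, ENNReal.ofReal (K y) * g y
        ≤ ∫⁻ y in ⋃ j, A j, ENNReal.ofReal (K y) * g y := lintegral_mono_set hcover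
      _ ≤ ∑' j, ∫⁻ y in A j, ENNReal.ofReal (K y) * g y := lintegral_iUnion_le _ _
      _ ≤ ∑' j : ℕ, ENNReal.ofReal
          ((2 * N * D ^ (1 / q) * c ^ (-(1 / p)) * R ^ (1 - d / p)) * q0 ^ j) :=
          ENNReal.tsum_le_tsum hterm
      _ = ENNReal.ofReal (∑' j : ℕ,
          (2 * N * D ^ (1 / q) * c ^ (-(1 / p)) * R ^ (1 - d / p)) * q0 ^ j) := by
          rw [ENNReal.ofReal_tsum_of_nonneg (fun j => ?_)
            ((summable_geometric_of_lt_one hq0pos.le hq0lt).mul_left _)]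
          have h1 : (0:ℝ) ≤ D ^ (1 / q) := (Real.rpow_pos_of_pos hD0 _).le
          have h2 : (0:ℝ) ≤ c ^ (-(1 / p)) := (Real.rpow_pos_of_pos hc _).le
          positivity
      _ = ENNReal.ofReal (Cf * N * R ^ (1 - d / p)) := by
          rw [tsum_mul_left, tsum_geometric_of_lt_one hq0pos.le hq0lt, hCf]
          congr 1
          ring
  -- COMBINE
  have eR1 : M' * R = N ^ (p / d) * M' ^ (1 - p / d) := by
    have h1 : M' ^ ((1:ℝ) - p / d) = M' / M' ^ (p / d) := by
      rw [Real.rpow_sub hM', Real.rpow_one]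
    rw [hRdef, Real.div_rpow hN.le hM'.le, h1]
    ring
  have eR2 : N * R ^ (1 - d / p) = N ^ (p / d) * M' ^ (1 - p / d) := by
    have h2 : R ^ (1 - d / p) = (N / M') ^ (p / d - 1) := by
      rw [hRdef, ← Real.rpow_mul (div_pos hN hM').le]
      congr 1
      field_simp
    have h3 : M' ^ ((1:ℝ) - p / d) = (M' ^ (p / d - 1))⁻¹ := by
      rw [← Real.rpow_neg hM'.le]
      congr 1
      ring
    have h4 : N * N ^ (p / d - 1) = N ^ (p / d) := by
      nth_rewrite 1 [← Real.rpow_one N]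
      rw [← Real.rpow_add hN]
      congr 1
      ring
    rw [h2, Real.div_rpow hN.le hM'.le, h3, div_eq_mul_inv, ← mul_assoc, h4]
  have hMeq : M ^ ((1:ℝ) - p / d) = ENNReal.ofReal (M' ^ ((1:ℝ) - p / d)) := by
    conv_lhs => rw [← ENNReal.ofReal_toReal hMt]
    rw [ENNReal.ofReal_rpow_of_nonneg ENNReal.toReal_nonneg h1pd.le]
  have hsplit := lintegral_add_compl (μ := (volume : Measure (EuclideanSpace ℝ (Fin n))))
    (fun y => ENNReal.ofReal (K y) * g y) (measurableSet_ball (x := x) (ε := R))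
  rw [hTw, ← hsplit]
  calc (∫⁻ y in ball x R, ENNReal.ofReal (K y) * g y) +
        ∫⁻ y in (ball x R)ᶜ, ENNReal.ofReal (K y) * g y
      ≤ M * ENNReal.ofReal (2 * D * R) + ENNReal.ofReal (Cf * N * R ^ (1 - d / p)) :=
        add_le_add hnear hfar
    _ = ENNReal.ofReal (M' * (2 * D * R)) + ENNReal.ofReal (Cf * (N * R ^ (1 - d / p))) := by
        have harr : Cf * N * R ^ (1 - d / p) = Cf * (N * R ^ (1 - d / p)) := by ring
        rw [← ENNReal.ofReal_toReal hMt, ← ENNReal.ofReal_mul ENNReal.toReal_nonneg, ← hM'def,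
          ← harr]
    _ = ENNReal.ofReal ((2 * D + Cf) * (N ^ (p / d) * M' ^ (1 - p / d))) := by
        rw [← ENNReal.ofReal_add (mul_nonneg hM'.le (by positivity))
          (mul_nonneg hCf0.le (mul_nonneg hN.le (Real.rpow_nonneg hR.le _)))]
        congr 1
        calc M' * (2 * D * R) + Cf * (N * R ^ (1 - d / p))
            = 2 * D * (M' * R) + Cf * (N * R ^ (1 - d / p)) := by ring
          _ = (2 * D + Cf) * (N ^ (p / d) * M' ^ (1 - p / d)) := by rw [eR1, eR2]; ring
    _ = ENNReal.ofReal ((2 * D + Cf) * N ^ (p / d)) * M ^ (1 - p / d) := by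
        rw [hMeq, ← ENNReal.ofReal_mul (mul_nonneg hCpos.le (Real.rpow_nonneg hN.le _)),
          mul_assoc]
end
end

section
/- Let d > 1 and 1 < p < d. Let w be a doubling weight on ℝⁿ with doubling constant D, satisfying w(B(x,r)) ≥ c r^d for all x ∈ ℝⁿ and r > 0 with c > 0. Then there is a constant C depending on D, c, p, d such that for every nonnegative f ∈ L^p(w), every x ∈ ℝⁿ, and every R > 0, ∫_{|y−x|≥R} (|x−y| / w(B(x,|x−y|))) f(y) w(y) dy ≤ C · R^{1−d/p} · ‖f‖_{L^p(w)}. -/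
open MeasureTheory Metric ENNReal

noncomputable section

/-- For `t ≥ 1` there is `k` with `2^k ≤ t < 2^(k+1)`. -/
lemma exists_pow_two_le_lt {t : ℝ} (ht : 1 ≤ t) :
    ∃ k : ℕ, (2 : ℝ) ^ k ≤ t ∧ t < 2 ^ (k + 1) := by
  have h0 : (0 : ℝ) ≤ t := le_trans zero_le_one ht
  have hm : ⌊t⌋₊ ≠ 0 := by
    have : (1 : ℕ) ≤ ⌊t⌋₊ := Nat.one_le_iff_ne_zero.mpr (by
      intro h
      have := Nat.floor_eq_zero.mp h
      linarith)
    omega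
  refine ⟨Nat.log 2 ⌊t⌋₊, ?_, ?_⟩
  · have h1 : 2 ^ Nat.log 2 ⌊t⌋₊ ≤ ⌊t⌋₊ := Nat.pow_log_le_self 2 hm
    calc (2 : ℝ) ^ Nat.log 2 ⌊t⌋₊ = ((2 ^ Nat.log 2 ⌊t⌋₊ : ℕ) : ℝ) := by push_cast; ring
    _ ≤ (⌊t⌋₊ : ℝ) := by exact_mod_cast h1
    _ ≤ t := Nat.floor_le h0
  · have h2 : ⌊t⌋₊ < 2 ^ (Nat.log 2 ⌊t⌋₊ + 1) := Nat.lt_pow_succ_log_self one_lt_two _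
    have h3 : (⌊t⌋₊ : ℝ) + 1 ≤ ((2 : ℝ)) ^ (Nat.log 2 ⌊t⌋₊ + 1) := by
      have : (⌊t⌋₊ + 1 : ℕ) ≤ 2 ^ (Nat.log 2 ⌊t⌋₊ + 1) := h2
      calc (⌊t⌋₊ : ℝ) + 1 = ((⌊t⌋₊ + 1 : ℕ) : ℝ) := by push_cast; ring
      _ ≤ ((2 ^ (Nat.log 2 ⌊t⌋₊ + 1) : ℕ) : ℝ) := by exact_mod_cast this
      _ = (2 : ℝ) ^ (Nat.log 2 ⌊t⌋₊ + 1) := by push_cast; ring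
    exact lt_of_lt_of_le (Nat.lt_floor_add_one t) h3

/-- Let `d > 1`, `1 < p < d`. There is `C = C(D,c,p,d)` such that if `w` is
doubling with constant `D` and satisfies `w(B(x,r)) ≥ c rᵈ` with `c > 0`, then for every
nonnegative `f ∈ L^p(w)`, every `x` and every `R > 0`,
`∫_{|y−x|≥R} (|x−y|/w(B(x,|x−y|))) f(y) w(y) dy ≤ C R^{1−d/p} ‖f‖_{L^p(w)}`. -/
theorem stmt15 (n : ℕ) (d p : ℝ) (hd : 1 < d) (hp : 1 < p) (hpd : p < d)
    (D c : ℝ) (hc : 0 < c) :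
    ∃ C : ℝ, 0 < C ∧
      ∀ w : EuclideanSpace ℝ (Fin n) → ℝ, IsDoubling w D →
        (∀ (x : EuclideanSpace ℝ (Fin n)) (r : ℝ), 0 < r →
          c * r ^ d ≤ ∫ y in ball x r, w y) →
        ∀ f : EuclideanSpace ℝ (Fin n) → ℝ, (∀ x, 0 ≤ f x) → Measurable f →
          Integrable (fun x => f x ^ p * w x) →
            ∀ (x : EuclideanSpace ℝ (Fin n)) (R : ℝ), 0 < R →
              (∫⁻ y in (ball x R)ᶜ,
                  ENNReal.ofReal ((dist x y / weightMass w x (dist x y)) * f y * w y)) ≤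
                ENNReal.ofReal
                  (C * R ^ (1 - d / p) * (∫ z, f z ^ p * w z) ^ (1 / p)) := by
  have hp0 : (0:ℝ) < p := lt_trans one_pos hp
  set q := Real.conjExponent p with hq_def
  have hpq : p.HolderConjugate q := Real.HolderConjugate.conjExponent hp
  have hq0 : (0:ℝ) < q := hpq.symm.pos
  set s := 1 - d / p with hs_def
  have hs_neg : s < 0 := by
    have : 1 < d / p := (one_lt_div hp0).mpr hpd
    simp only [hs_def]; linarith
  set θ := (2:ℝ) ^ s with hθ_def
  have hθ_pos : 0 < θ := Real.rpow_pos_of_pos two_pos s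
  have hθ_lt : θ < 1 := Real.rpow_lt_one_of_one_lt_of_neg one_lt_two hs_neg
  set D' := max D 1 with hD'_def
  have hD'_pos : (0:ℝ) < D' := lt_of_lt_of_le one_pos (le_max_right _ _)
  set C := 2 * D' ^ (1/q) * c ^ (-(1/p)) * (1 - θ)⁻¹ with hC_def
  have hC_pos : 0 < C := by
    have h1 : (0:ℝ) < D' ^ (1/q) := Real.rpow_pos_of_pos hD'_pos _
    have h2 : (0:ℝ) < c ^ (-(1/p)) := Real.rpow_pos_of_pos hc _
    have h3 : (0:ℝ) < (1 - θ)⁻¹ := inv_pos.mpr (by linarith)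
    positivity
  refine ⟨C, hC_pos, ?_⟩
  rintro w ⟨hw0, hwloc, hwdbl⟩ hlow f hf0 hfm hfint x R hR
  -- basic facts about the weight
  have hint : ∀ r : ℝ, IntegrableOn w (ball x r) volume := fun r =>
    (hwloc.integrableOn_isCompact (isCompact_closedBall x r)).mono_set
      ball_subset_closedBall
  have hWpos : ∀ r : ℝ, 0 < r → 0 < weightMass w x r := fun r hr =>
    lt_of_lt_of_le (by positivity) (hlow x r hr)
  have hWmono : ∀ r r' : ℝ, r ≤ r' → weightMass w x r ≤ weightMass w x r' := by
    intro r r' hrr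
    exact setIntegral_mono_set (hint r')
      (Filter.Eventually.of_forall hw0)
      (HasSubset.Subset.eventuallyLE (ball_subset_ball hrr))
  have hw_am : AEMeasurable (fun y => ENNReal.ofReal (w y)) volume :=
    ENNReal.measurable_ofReal.comp_aemeasurable hwloc.aestronglyMeasurable.aemeasurable
  have hWof : ∀ r : ℝ, ENNReal.ofReal (weightMass w x r)
      = ∫⁻ y in ball x r, ENNReal.ofReal (w y) := fun r =>
    MeasureTheory.ofReal_integral_eq_lintegral_ofReal (hint r)
      (Filter.Eventually.of_forall hw0)
  -- the L^p data
  set I := ∫ z, f z ^ p * w z with hI_def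
  have hI_nonneg : 0 ≤ I := integral_nonneg fun z => by
    have := Real.rpow_nonneg (hf0 z) p
    have := hw0 z
    positivity
  have hIof : ENNReal.ofReal I = ∫⁻ z, ENNReal.ofReal (f z ^ p * w z) :=
    MeasureTheory.ofReal_integral_eq_lintegral_ofReal hfint
      (Filter.Eventually.of_forall fun z => by
        have := Real.rpow_nonneg (hf0 z) p
        have := hw0 z
        positivity)
  set L : ℝ≥0∞ := (ENNReal.ofReal I) ^ (1/p) with hL_def
  -- annuli
  set A : ℕ → Set (EuclideanSpace ℝ (Fin n)) :=
    fun k => ball x (2 ^ (k+1) * R) \ ball x (2 ^ k * R) with hA_def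
  have hA_meas : ∀ k, MeasurableSet (A k) := fun k =>
    (measurableSet_ball).diff measurableSet_ball
  have hcover : (ball x R)ᶜ ⊆ ⋃ k, A k := by
    intro y hy
    have hyR : R ≤ dist y x := by
      simpa [mem_ball, not_lt] using hy
    have ht1 : 1 ≤ dist y x / R := (one_le_div hR).mpr hyR
    obtain ⟨k, hk1, hk2⟩ := exists_pow_two_le_lt ht1
    refine Set.mem_iUnion.mpr ⟨k, ?_, ?_⟩
    · simp only [mem_ball]
      calc dist y x = (dist y x / R) * R := by field_simp
      _ < 2 ^ (k+1) * R := by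
          exact mul_lt_mul_of_pos_right hk2 hR
    · simp only [mem_ball, not_lt]
      calc (2:ℝ) ^ k * R ≤ (dist y x / R) * R := mul_le_mul_of_nonneg_right hk1 hR.le
      _ = dist y x := by field_simp
  -- per-annulus estimate
  have key : ∀ k : ℕ,
      (∫⁻ y in A k, ENNReal.ofReal ((dist x y / weightMass w x (dist x y)) * f y * w y))
        ≤ ENNReal.ofReal ((2 * D' ^ (1/q) * c ^ (-(1/p)) * R ^ s) * θ ^ k) * L := by
    intro k
    set r : ℝ := 2 ^ k * R with hr_def
    have hr_pos : 0 < r := by positivity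
    set W := weightMass w x r with hW_def
    have hW_pos : 0 < W := hWpos r hr_pos
    have h2r : (2:ℝ) ^ (k+1) * R = 2 * r := by rw [hr_def]; ring
    -- pointwise bound on the annulus
    have step1 : (∫⁻ y in A k,
        ENNReal.ofReal ((dist x y / weightMass w x (dist x y)) * f y * w y))
        ≤ ∫⁻ y in A k, ENNReal.ofReal (2 * r / W) * ENNReal.ofReal (f y * w y) := by
      apply setLIntegral_mono' (hA_meas k)
      intro y hy
      obtain ⟨hy1, hy2⟩ := hy
      rw [mem_ball] at hy1
      rw [mem_ball, not_lt] at hy2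
      have hdxy : dist x y = dist y x := dist_comm x y
      have hd1 : dist x y < 2 * r := by rw [hdxy, ← h2r]; exact hy1
      have hd2 : r ≤ dist x y := by rw [hdxy]; exact hy2
      have hWle : W ≤ weightMass w x (dist x y) := hWmono r _ hd2
      have hker : dist x y / weightMass w x (dist x y) ≤ 2 * r / W := by
        apply div_le_div₀ (by positivity) hd1.le hW_pos hWle
      rw [← ENNReal.ofReal_mul (by positivity)]
      apply ENNReal.ofReal_le_ofReal
      have hfw : 0 ≤ f y * w y := mul_nonneg (hf0 y) (hw0 y)
      calc dist x y / weightMass w x (dist x y) * f y * w y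
          = (dist x y / weightMass w x (dist x y)) * (f y * w y) := by ring
        _ ≤ (2 * r / W) * (f y * w y) := mul_le_mul_of_nonneg_right hker hfw
    rw [lintegral_const_mul' _ _ ENNReal.ofReal_ne_top] at step1
    -- Hölder on the annulus
    set F : EuclideanSpace ℝ (Fin n) → ℝ≥0∞ :=
      fun y => ENNReal.ofReal (f y) * (ENNReal.ofReal (w y)) ^ (1/p) with hF_def
    set G : EuclideanSpace ℝ (Fin n) → ℝ≥0∞ :=
      fun y => (ENNReal.ofReal (w y)) ^ (1/q) with hG_def
    have hFG : ∀ y, F y * G y = ENNReal.ofReal (f y * w y) := by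
      intro y
      rw [ENNReal.ofReal_mul (hf0 y), hF_def, hG_def]
      have : (ENNReal.ofReal (w y)) ^ (1/p) * (ENNReal.ofReal (w y)) ^ (1/q)
          = ENNReal.ofReal (w y) := by
        rw [← ENNReal.rpow_add_of_nonneg _ _ (by positivity) (by positivity)]
        rw [one_div, one_div, hpq.inv_add_inv_eq_one, ENNReal.rpow_one]
      rw [mul_assoc, this]
    have hFp : ∀ y, F y ^ p = ENNReal.ofReal (f y ^ p * w y) := by
      intro y
      rw [hF_def]
      rw [ENNReal.mul_rpow_of_nonneg _ _ hp0.le]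
      rw [← ENNReal.rpow_mul, one_div, inv_mul_cancel₀ hp0.ne', ENNReal.rpow_one]
      rw [ENNReal.ofReal_rpow_of_nonneg (hf0 y) hp0.le]
      rw [← ENNReal.ofReal_mul (Real.rpow_nonneg (hf0 y) p)]
    have hGq : ∀ y, G y ^ q = ENNReal.ofReal (w y) := by
      intro y
      rw [hG_def, ← ENNReal.rpow_mul, one_div, inv_mul_cancel₀ hq0.ne', ENNReal.rpow_one]
    have hF_am : AEMeasurable F (volume.restrict (A k)) := by
      exact ((ENNReal.measurable_ofReal.comp hfm).aemeasurable.mul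
        (hw_am.pow_const (1/p))).restrict
    have hG_am : AEMeasurable G (volume.restrict (A k)) :=
      (hw_am.pow_const (1/q)).restrict
    have holder := ENNReal.lintegral_mul_le_Lp_mul_Lq (volume.restrict (A k)) hpq hF_am hG_am
    simp only [Pi.mul_apply] at holder
    rw [show (fun y => F y * G y) = fun y => ENNReal.ofReal (f y * w y) from
      funext hFG] at holder
    have holder' : (∫⁻ y in A k, ENNReal.ofReal (f y * w y))
        ≤ L * (ENNReal.ofReal (D' * W)) ^ (1/q) := by
      refine le_trans holder (mul_le_mul ?_ ?_ zero_le zero_le)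
      · -- Lp factor
        rw [hL_def, hIof]
        apply ENNReal.rpow_le_rpow _ (by positivity)
        calc ∫⁻ y in A k, F y ^ p = ∫⁻ y in A k, ENNReal.ofReal (f y ^ p * w y) := by
              exact lintegral_congr fun y => hFp y
        _ ≤ ∫⁻ z, ENNReal.ofReal (f z ^ p * w z) := setLIntegral_le_lintegral _ _
      · -- weight factor
        apply ENNReal.rpow_le_rpow _ (by positivity)
        calc ∫⁻ y in A k, G y ^ q = ∫⁻ y in A k, ENNReal.ofReal (w y) := by
              exact lintegral_congr fun y => hGq y
        _ ≤ ∫⁻ y in ball x (2 * r), ENNReal.ofReal (w y) := by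
              apply lintegral_mono_set
              rw [← h2r]
              exact (Set.diff_subset).trans (subset_refl _)
        _ = ENNReal.ofReal (weightMass w x (2 * r)) := (hWof (2*r)).symm
        _ ≤ ENNReal.ofReal (D' * W) := by
              apply ENNReal.ofReal_le_ofReal
              calc weightMass w x (2 * r) ≤ D * W := hwdbl x r hr_pos
              _ ≤ D' * W := mul_le_mul_of_nonneg_right (le_max_left _ _) hW_pos.le
    -- combine
    have hcomb : ENNReal.ofReal (2 * r / W) * (L * (ENNReal.ofReal (D' * W)) ^ (1/q))
        ≤ ENNReal.ofReal ((2 * D' ^ (1/q) * c ^ (-(1/p)) * R ^ s) * θ ^ k) * L := by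
      rw [ENNReal.ofReal_rpow_of_pos (by positivity), mul_comm L,
        ← mul_assoc, ← ENNReal.ofReal_mul (by positivity)]
      refine mul_le_mul_left (ENNReal.ofReal_le_ofReal ?_) L
      -- real arithmetic
      have e1 : 2 * r / W * (D' * W) ^ (1/q)
          = 2 * r * D' ^ (1/q) * W ^ (1/q - 1) := by
        rw [Real.mul_rpow hD'_pos.le hW_pos.le]
        rw [Real.rpow_sub hW_pos, Real.rpow_one]
        field_simp
      have e2 : (1:ℝ)/q - 1 = -(1/p) := by
        have := hpq.inv_add_inv_eq_one
        rw [one_div, one_div]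
        linarith
      have e3 : W ^ (-(1/p)) ≤ (c * r ^ d) ^ (-(1/p)) := by
        apply Real.rpow_le_rpow_of_nonpos (by positivity) (hlow x r hr_pos)
        exact neg_nonpos.mpr (le_of_lt (one_div_pos.mpr hp0))
      have e4 : (c * r ^ d) ^ (-(1/p)) = c ^ (-(1/p)) * r ^ (-(d/p)) := by
        rw [Real.mul_rpow hc.le (Real.rpow_nonneg hr_pos.le d),
          ← Real.rpow_mul hr_pos.le]
        congr 1
        ring
      have e5 : r * r ^ (-(d/p)) = r ^ s := by
        rw [hs_def]
        rw [show (1:ℝ) - d/p = 1 + -(d/p) by ring]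
        rw [Real.rpow_add hr_pos, Real.rpow_one]
      have e6 : r ^ s = θ ^ k * R ^ s := by
        rw [hr_def, Real.mul_rpow (by positivity) hR.le, hθ_def]
        congr 1
        rw [← Real.rpow_natCast ((2:ℝ) ^ s) k, ← Real.rpow_natCast (2:ℝ) k]
        rw [← Real.rpow_mul (by norm_num), ← Real.rpow_mul (by norm_num)]
        rw [mul_comm]
      calc 2 * r / W * (D' * W) ^ (1/q)
          = 2 * r * D' ^ (1/q) * W ^ (1/q - 1) := e1
        _ = 2 * D' ^ (1/q) * (r * W ^ (-(1/p))) := by rw [e2]; ring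
        _ ≤ 2 * D' ^ (1/q) * (r * ((c * r ^ d) ^ (-(1/p)))) := by
            apply mul_le_mul_of_nonneg_left _ (by positivity)
            exact mul_le_mul_of_nonneg_left e3 hr_pos.le
        _ = 2 * D' ^ (1/q) * c ^ (-(1/p)) * (r * r ^ (-(d/p))) := by rw [e4]; ring
        _ = 2 * D' ^ (1/q) * c ^ (-(1/p)) * R ^ s * θ ^ k := by rw [e5, e6]; ring
    calc (∫⁻ y in A k,
        ENNReal.ofReal ((dist x y / weightMass w x (dist x y)) * f y * w y))
        ≤ ENNReal.ofReal (2 * r / W) * ∫⁻ y in A k, ENNReal.ofReal (f y * w y) := step1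
      _ ≤ ENNReal.ofReal (2 * r / W) * (L * (ENNReal.ofReal (D' * W)) ^ (1/q)) :=
          mul_le_mul_right holder' _
      _ ≤ ENNReal.ofReal ((2 * D' ^ (1/q) * c ^ (-(1/p)) * R ^ s) * θ ^ k) * L := hcomb
  -- sum up
  set a : ℝ := 2 * D' ^ (1/q) * c ^ (-(1/p)) * R ^ s with ha_def
  have ha_nonneg : 0 ≤ a := by positivity
  have hsummable : Summable (fun k : ℕ => a * θ ^ k) :=
    (summable_geometric_of_lt_one hθ_pos.le hθ_lt).mul_left a
  have htsum : ∑' k : ℕ, a * θ ^ k = a * (1 - θ)⁻¹ := by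
    rw [tsum_mul_left, tsum_geometric_of_lt_one hθ_pos.le hθ_lt]
  calc (∫⁻ y in (ball x R)ᶜ,
      ENNReal.ofReal ((dist x y / weightMass w x (dist x y)) * f y * w y))
      ≤ ∫⁻ y in ⋃ k, A k,
        ENNReal.ofReal ((dist x y / weightMass w x (dist x y)) * f y * w y) :=
        lintegral_mono_set hcover
    _ ≤ ∑' k : ℕ, ∫⁻ y in A k,
        ENNReal.ofReal ((dist x y / weightMass w x (dist x y)) * f y * w y) :=
        lintegral_iUnion_le _ _
    _ ≤ ∑' k : ℕ, ENNReal.ofReal (a * θ ^ k) * L := ENNReal.tsum_le_tsum key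
    _ = (∑' k : ℕ, ENNReal.ofReal (a * θ ^ k)) * L := ENNReal.tsum_mul_right
    _ = ENNReal.ofReal (a * (1 - θ)⁻¹) * L := by
        rw [← htsum, ENNReal.ofReal_tsum_of_nonneg (fun k => by positivity) hsummable]
    _ = ENNReal.ofReal (C * R ^ s * I ^ (1/p)) := by
        rw [hL_def, ENNReal.ofReal_rpow_of_nonneg hI_nonneg (by positivity)]
        rw [← ENNReal.ofReal_mul
          (mul_nonneg ha_nonneg (inv_nonneg.mpr (by linarith)))]
        congr 1
        rw [hC_def, ha_def]
        ring
end
end
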